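/- Let A = (Σ, Q, I, F, δ) be a complete NBA. The relation P(⊑^{bw-di}, ⊏^{di-sim}), which compares source states of transitions by backward direct trace inclusion and target states by strict direct forward simulation, is good for pruning: L(Prune(A, P(⊑^{bw-di}, ⊏^{di-sim}))) = L(A). -/

import Mathlib

/-- A nondeterministic automaton (used both as NBA and NFA):
initial states, accepting states, and a transition relation. -/
structure NA (A : Type*) (Q : Type*) where
  ini : Set Q
  acc : Set Q
  trans : Set (Q × A × Q)

namespace NA

variable {A Q Q₁ Q₂ : Type*}

/-- Forward and backward completeness. -/
def Complete (M : NA A Q) : Prop :=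
  ∀ (p : Q) (a : A), (∃ q, (q, a, p) ∈ M.trans) ∧ (∃ q, (p, a, q) ∈ M.trans)

/-- Infinite run on an infinite word. -/
def InfRun (M : NA A Q) (w : ℕ → A) (π : ℕ → Q) : Prop :=
  ∀ i, (π i, w i, π (i + 1)) ∈ M.trans

/-- Fairness: accepting states are visited infinitely often. -/
def Fair (M : NA A Q) (π : ℕ → Q) : Prop :=
  ∀ n, ∃ m, n ≤ m ∧ π m ∈ M.acc

/-- The ω-language of a Büchi automaton. -/
def BuchiLang (M : NA A Q) : Set (ℕ → A) :=
  {w | ∃ π, π 0 ∈ M.ini ∧ M.InfRun w π ∧ M.Fair π}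

/-- Finite run on a finite word (only the first `w.length + 1` values of `π` matter). -/
def FinRun (M : NA A Q) (w : List A) (π : ℕ → Q) : Prop :=
  ∀ (i : ℕ) (h : i < w.length), (π i, w.get ⟨i, h⟩, π (i + 1)) ∈ M.trans

/-- The finite-word language of an NFA. -/
def FinLang (M : NA A Q) : Set (List A) :=
  {w | ∃ π, π 0 ∈ M.ini ∧ M.FinRun w π ∧ π w.length ∈ M.acc}

/-- Direct (forward) trace inclusion. -/
def DiTraceIncl (M : NA A Q₁) (N : NA A Q₂) (p : Q₁) (q : Q₂) : Prop :=
  ∀ (w : ℕ → A) (π : ℕ → Q₁), π 0 = p → M.InfRun w π →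
    ∃ ρ : ℕ → Q₂, ρ 0 = q ∧ N.InfRun w ρ ∧ ∀ i, π i ∈ M.acc → ρ i ∈ N.acc

/-- Fair trace inclusion. -/
def FairTraceIncl (M : NA A Q₁) (N : NA A Q₂) (p : Q₁) (q : Q₂) : Prop :=
  ∀ (w : ℕ → A) (π : ℕ → Q₁), π 0 = p → M.InfRun w π →
    ∃ ρ : ℕ → Q₂, ρ 0 = q ∧ N.InfRun w ρ ∧ (M.Fair π → N.Fair ρ)

/-- Backward direct trace inclusion. -/
def BwDiTraceIncl (M : NA A Q₁) (N : NA A Q₂) (p : Q₁) (q : Q₂) : Prop :=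
  ∀ (w : List A) (π : ℕ → Q₁), π 0 ∈ M.ini → M.FinRun w π → π w.length = p →
    ∃ ρ : ℕ → Q₂, ρ 0 ∈ N.ini ∧ N.FinRun w ρ ∧ ρ w.length = q ∧
      ∀ i, i ≤ w.length → π i ∈ M.acc → ρ i ∈ N.acc

/-- Forward finite trace inclusion. -/
def FwFinTraceIncl (M : NA A Q₁) (N : NA A Q₂) (p : Q₁) (q : Q₂) : Prop :=
  ∀ (w : List A) (π : ℕ → Q₁), π 0 = p → M.FinRun w π → π w.length ∈ M.acc →
    ∃ ρ : ℕ → Q₂, ρ 0 = q ∧ N.FinRun w ρ ∧ ρ w.length ∈ N.acc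

/-- Backward finite trace inclusion. -/
def BwFinTraceIncl (M : NA A Q₁) (N : NA A Q₂) (p : Q₁) (q : Q₂) : Prop :=
  ∀ (w : List A) (π : ℕ → Q₁), π 0 ∈ M.ini → M.FinRun w π → π w.length = p →
    ∃ ρ : ℕ → Q₂, ρ 0 ∈ N.ini ∧ N.FinRun w ρ ∧ ρ w.length = q

/-- Counting backward trace inclusion: the matching initial trace visits
accepting states at least as often. -/
def CountBwTraceIncl (M : NA A Q) (p q : Q) : Prop :=
  ∀ (w : List A) (π : ℕ → Q), π 0 ∈ M.ini → M.FinRun w π → π w.length = p →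
    ∃ ρ : ℕ → Q, ρ 0 ∈ M.ini ∧ M.FinRun w ρ ∧ ρ w.length = q ∧
      {i | i ≤ w.length ∧ π i ∈ M.acc}.ncard ≤ {i | i ≤ w.length ∧ ρ i ∈ M.acc}.ncard

/-- `R` is a direct forward simulation. -/
def IsDiSim (M : NA A Q₁) (N : NA A Q₂) (R : Q₁ → Q₂ → Prop) : Prop :=
  ∀ p q, R p q → (p ∈ M.acc → q ∈ N.acc) ∧
    ∀ a p', (p, a, p') ∈ M.trans → ∃ q', (q, a, q') ∈ N.trans ∧ R p' q'

/-- Direct forward simulation (the largest direct forward simulation). -/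
def DiSim (M : NA A Q₁) (N : NA A Q₂) (p : Q₁) (q : Q₂) : Prop :=
  ∃ R, IsDiSim M N R ∧ R p q

/-- `R` is a backward direct simulation (matching accepting and initial states). -/
def IsBwDiSim (M : NA A Q₁) (N : NA A Q₂) (R : Q₁ → Q₂ → Prop) : Prop :=
  ∀ p q, R p q → (p ∈ M.acc → q ∈ N.acc) ∧ (p ∈ M.ini → q ∈ N.ini) ∧
    ∀ a p', (p', a, p) ∈ M.trans → ∃ q', (q', a, q) ∈ N.trans ∧ R p' q'

/-- Backward direct simulation (the largest backward direct simulation). -/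
def BwDiSim (M : NA A Q₁) (N : NA A Q₂) (p : Q₁) (q : Q₂) : Prop :=
  ∃ R, IsBwDiSim M N R ∧ R p q

/-- `R` is a backward finite-word simulation (matching only initial states). -/
def IsBwSim (M : NA A Q₁) (N : NA A Q₂) (R : Q₁ → Q₂ → Prop) : Prop :=
  ∀ p q, R p q → (p ∈ M.ini → q ∈ N.ini) ∧
    ∀ a p', (p', a, p) ∈ M.trans → ∃ q', (q', a, q) ∈ N.trans ∧ R p' q'

/-- Backward finite-word simulation (the largest backward finite-word simulation). -/
def BwSim (M : NA A Q₁) (N : NA A Q₂) (p : Q₁) (q : Q₂) : Prop :=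
  ∃ R, IsBwSim M N R ∧ R p q

/-- Strict version of a relation: `x ⊏ y` iff `x ⊑ y` and not `y ⊑ x`. -/
def StrictRel (R : Q₁ → Q₁ → Prop) (x y : Q₁) : Prop := R x y ∧ ¬ R y x

/-- Comparing two transitions endpoint-wise; they must carry the same symbol. -/
def PairRel (Rb Rf : Q₁ → Q₂ → Prop) (t : Q₁ × A × Q₁) (t' : Q₂ × A × Q₂) : Prop :=
  t.2.1 = t'.2.1 ∧ Rb t.1 t'.1 ∧ Rf t.2.2 t'.2.2

/-- Pruned automaton: keep the transitions that are maximal w.r.t. `P`. -/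
def prune (M : NA A Q) (P : (Q × A × Q) → (Q × A × Q) → Prop) : NA A Q :=
  ⟨M.ini, M.acc, {t | t ∈ M.trans ∧ ¬ ∃ t' ∈ M.trans, P t t'}⟩

/-- Cross-pruned automaton: remove transitions of `M` subsumed by transitions of `N`. -/
def pruneAB (M : NA A Q₁) (N : NA A Q₂) (P : (Q₁ × A × Q₁) → (Q₂ × A × Q₂) → Prop) :
    NA A Q₁ :=
  ⟨M.ini, M.acc, {t | t ∈ M.trans ∧ ¬ ∃ t' ∈ N.trans, P t t'}⟩

/-- Saturated automaton: add every transition `S`-below an existing transition. -/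
def saturate (M : NA A Q) (S : (Q × A × Q) → (Q × A × Q) → Prop) : NA A Q :=
  ⟨M.ini, M.acc, {t | ∃ t' ∈ M.trans, S t t'}⟩

/-- A transition is transient if it occurs at most once in every trace. -/
def Transient (M : NA A Q) (t : Q × A × Q) : Prop :=
  ∀ (w : ℕ → A) (π : ℕ → Q), M.InfRun w π →
    ∀ i j, (π i, w i, π (i + 1)) = t → (π j, w j, π (j + 1)) = t → i = j

/-- Equivalence class of `q` w.r.t. the equivalence induced by the preorder `R`. -/
def cls (R : Q → Q → Prop) (q : Q) : Set Q := {x | R q x ∧ R x q}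

/-- Quotient automaton by the preorder `R`; equivalence classes are modeled as
the corresponding subsets of `Q`. -/
def quot (M : NA A Q) (R : Q → Q → Prop) : NA A (Set Q) :=
  ⟨{c | ∃ q ∈ M.ini, c = cls R q},
   {c | ∃ q ∈ M.acc, c = cls R q},
   {t | ∃ q₁ q₂, t.1 = cls R q₁ ∧ t.2.2 = cls R q₂ ∧ (q₁, t.2.1, q₂) ∈ M.trans}⟩

/-- `R`-jumping run: before each transition, jump to an `R`-larger state. -/
def JumpRun (M : NA A Q) (R : Q → Q → Prop) (w : ℕ → A) (π π' : ℕ → Q) : Prop :=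
  ∀ i, R (π i) (π' i) ∧ (π' i, w i, π (i + 1)) ∈ M.trans

/-- A jumping run is fair if it is accepting at infinitely many steps. -/
def JumpFair (M : NA A Q) (R : Q → Q → Prop) (π π' : ℕ → Q) : Prop :=
  ∀ n, ∃ m, n ≤ m ∧ ∃ q'' ∈ M.acc, R (π m) q'' ∧ R q'' (π' m)

end NA

namespace NAaux

open NA

variable {A Q : Type*}

lemma diSim_refl (M : NA A Q) (p : Q) : M.DiSim M p p :=
  ⟨Eq, fun a b h => h ▸ ⟨fun h' => h', fun _ a' ht => ⟨a', ht, rfl⟩⟩, rfl⟩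

lemma diSim_isSim (M : NA A Q) : M.IsDiSim M (M.DiSim M) := by
  rintro p q ⟨R, hR, hpq⟩
  obtain ⟨hacc, hstep⟩ := hR p q hpq
  exact ⟨hacc, fun a p' ht => by
    obtain ⟨q', hq', hR'⟩ := hstep a p' ht
    exact ⟨q', hq', R, hR, hR'⟩⟩

lemma diSim_trans (M : NA A Q) {p q r : Q} (h1 : M.DiSim M p q) (h2 : M.DiSim M q r) :
    M.DiSim M p r := by
  refine ⟨fun x z => ∃ y, M.DiSim M x y ∧ M.DiSim M y z, ?_, q, h1, h2⟩
  rintro x z ⟨y, hxy, hyz⟩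
  obtain ⟨ha1, hs1⟩ := diSim_isSim M x y hxy
  obtain ⟨ha2, hs2⟩ := diSim_isSim M y z hyz
  refine ⟨fun h => ha2 (ha1 h), fun a x' ht => ?_⟩
  obtain ⟨y', hty, hxy'⟩ := hs1 a x' ht
  obtain ⟨z', htz, hyz'⟩ := hs2 a y' hty
  exact ⟨z', htz, y', hxy', hyz'⟩

lemma diSim_acc (M : NA A Q) {p q : Q} (h : M.DiSim M p q) : p ∈ M.acc → q ∈ M.acc :=
  (diSim_isSim M p q h).1

lemma bw_refl (M : NA A Q) (p : Q) : M.BwDiTraceIncl M p p :=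
  fun _ π h1 h2 h3 => ⟨π, h1, h2, h3, fun _ _ h => h⟩

noncomputable def rk [Fintype Q] (M : NA A Q) (q : Q) : ℕ := {x | M.DiSim M x q}.ncard

lemma rk_mono [Fintype Q] (M : NA A Q) {p q : Q} (h : M.DiSim M p q) : rk M p ≤ rk M q :=
  Set.ncard_le_ncard (fun x hx => diSim_trans M hx h) (Set.toFinite _)

lemma rk_strict [Fintype Q] (M : NA A Q) {p q : Q} (h : NA.StrictRel (M.DiSim M) p q) :
    rk M p < rk M q := by
  apply Set.ncard_lt_ncard ?_ (Set.toFinite _)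
  constructor
  · exact fun x hx => diSim_trans M hx h.1
  · intro hsub
    exact h.2 (hsub (diSim_refl M q))

lemma rk_le [Fintype Q] (M : NA A Q) (q : Q) : rk M q ≤ Fintype.card Q := by
  have := Set.ncard_le_ncard (Set.subset_univ {x | M.DiSim M x q}) Set.finite_univ
  simpa [rk, Set.ncard_univ] using this

lemma koenig {Q : Type*} [Finite Q] [Nonempty Q] (Good : ℕ → (ℕ → Q) → Prop)
    (hmono : ∀ m n ρ, m ≤ n → Good n ρ → Good m ρ)
    (hdep : ∀ n ρ ρ', (∀ i ≤ n, ρ i = ρ' i) → Good n ρ → Good n ρ')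
    (hex : ∀ n, ∃ ρ, Good n ρ) : ∃ ρ, ∀ n, Good n ρ := by
  classical
  set Ext : ℕ → (ℕ → Q) → Prop :=
    fun n g => ∀ m, ∃ ρ, Good m ρ ∧ ∀ i < n, ρ i = g i with hExtDef
  have step : ∀ n g, Ext n g → ∃ q, Ext (n+1) (Function.update g n q) := by
    intro n g hg
    set c : ℕ → Q := fun m => Classical.choose (hg m) n with hc
    obtain ⟨q, hq⟩ := Finite.exists_infinite_fiber c
    refine ⟨q, fun m => ?_⟩
    have hinf : (c ⁻¹' {q}).Infinite := Set.infinite_coe_iff.mp hq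
    have hgt : ∃ m' ∈ c ⁻¹' {q}, m < m' := by
      by_contra hcon
      push_neg at hcon
      exact hinf ((Set.finite_Iic m).subset (fun x hx => hcon x hx))
    obtain ⟨m', hm'q, hmm'⟩ := hgt
    obtain ⟨hGood, hagree⟩ := Classical.choose_spec (hg m')
    refine ⟨Classical.choose (hg m'), hmono m m' _ hmm'.le hGood, ?_⟩
    intro i hi
    rcases Nat.lt_succ_iff_lt_or_eq.mp hi with h | h
    · rw [Function.update_of_ne (by omega), hagree i h]
    · subst h
      rw [Function.update_self]
      simpa [hc] using hm'q
  have base : Ext 0 (fun _ => Classical.arbitrary Q) :=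
    fun m => (hex m).imp (fun ρ h => ⟨h, fun i hi => absurd hi (by omega)⟩)
  let F : ∀ n, {g : ℕ → Q // Ext n g} := fun n =>
    Nat.rec ⟨_, base⟩
      (fun n p => ⟨Function.update p.1 n (Classical.choose (step n p.1 p.2)),
        Classical.choose_spec (step n p.1 p.2)⟩) n
  have hag : ∀ m i, i < m → (F m).1 i = (F (i+1)).1 i := by
    intro m
    induction m with
    | zero => omega
    | succ k ih =>
      intro i hi
      rcases Nat.lt_succ_iff_lt_or_eq.mp hi with h | h
      · have he : (F (k+1)).1 i = (F k).1 i := Function.update_of_ne (by omega) _ _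
        rw [he, ih i h]
      · subst h; rfl
  refine ⟨fun i => (F (i+1)).1 i, fun n => ?_⟩
  obtain ⟨τ, hτ, hagr⟩ := (F (n+1)).2 n
  refine hdep n τ _ (fun i hi => ?_) hτ
  rw [hagr i (by omega)]
  exact hag (n+1) i (by omega)

lemma exists_kept_aux [Fintype Q] (M : NA A Q) (n : ℕ) :
    ∀ t ∈ M.trans, Fintype.card Q - rk M t.2.2 ≤ n →
    ∃ t' ∈ (M.prune (NA.PairRel (M.BwDiTraceIncl M) (NA.StrictRel (M.DiSim M)))).trans,
      t.2.1 = t'.2.1 ∧ M.BwDiTraceIncl M t.1 t'.1 ∧ M.DiSim M t.2.2 t'.2.2 := by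
  induction n with
  | zero =>
    intro t ht hn
    by_cases h : ∃ t' ∈ M.trans,
        NA.PairRel (M.BwDiTraceIncl M) (NA.StrictRel (M.DiSim M)) t t'
    · obtain ⟨t', ht', hP⟩ := h
      have h1 : rk M t.2.2 < rk M t'.2.2 := rk_strict M hP.2.2
      have h2 := rk_le M t'.2.2
      omega
    · exact ⟨t, ⟨ht, h⟩, rfl, bw_refl M _, diSim_refl M _⟩
  | succ n ih =>
    intro t ht hn
    by_cases h : ∃ t' ∈ M.trans,
        NA.PairRel (M.BwDiTraceIncl M) (NA.StrictRel (M.DiSim M)) t t'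
    · obtain ⟨t', ht', hP⟩ := h
      have h1 : rk M t.2.2 < rk M t'.2.2 := rk_strict M hP.2.2
      obtain ⟨t'', ht'', hsym, hb, hf⟩ := ih t' ht' (by omega)
      refine ⟨t'', ht'', hP.1.trans hsym, ?_, diSim_trans M hP.2.2.1 hf⟩
      intro w π h1' h2' h3'
      obtain ⟨ρ, hρ1, hρ2, hρ3, hρ4⟩ := hP.2.1 w π h1' h2' h3'
      obtain ⟨σ, hσ1, hσ2, hσ3, hσ4⟩ := hb w ρ hρ1 hρ2 hρ3
      exact ⟨σ, hσ1, hσ2, hσ3, fun i hi hacc => hσ4 i hi (hρ4 i hi hacc)⟩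
    · exact ⟨t, ⟨ht, h⟩, rfl, bw_refl M _, diSim_refl M _⟩

lemma exists_kept [Fintype Q] (M : NA A Q) :
    ∀ t ∈ M.trans,
    ∃ t' ∈ (M.prune (NA.PairRel (M.BwDiTraceIncl M) (NA.StrictRel (M.DiSim M)))).trans,
      t.2.1 = t'.2.1 ∧ M.BwDiTraceIncl M t.1 t'.1 ∧ M.DiSim M t.2.2 t'.2.2 :=
  fun t ht => exists_kept_aux M _ t ht le_rfl

lemma sim_run (M : NA A Q) (w : ℕ → A) :
    ∀ (n : ℕ) (π : ℕ → Q) (q : Q), M.DiSim M (π 0) q →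
      (∀ i < n, (π i, w i, π (i+1)) ∈ M.trans) →
      ∃ ρ : ℕ → Q, ρ 0 = q ∧ (∀ i < n, (ρ i, w i, ρ (i+1)) ∈ M.trans) ∧
        ∀ i ≤ n, M.DiSim M (π i) (ρ i) := by
  intro n
  induction n with
  | zero =>
    intro π q h _
    exact ⟨fun _ => q, rfl, fun i hi => absurd hi (by omega),
      fun i hi => by rw [Nat.le_zero.mp hi]; exact h⟩
  | succ n ih =>
    intro π q h hrun
    obtain ⟨ρ, h0, hr, hsim⟩ := ih π q h (fun i hi => hrun i (by omega))
    obtain ⟨q', hq't, hq's⟩ := (diSim_isSim M _ _ (hsim n le_rfl)).2 (w n) (π (n+1))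
      (hrun n (by omega))
    refine ⟨fun i => if i ≤ n then ρ i else q', by simpa using h0, ?_, ?_⟩
    · intro i hi
      rcases Nat.lt_succ_iff_lt_or_eq.mp hi with hlt | heq
      · simpa [show i ≤ n by omega, show i + 1 ≤ n by omega] using hr i hlt
      · subst heq
        simpa using hq't
    · intro i hi
      rcases Nat.lt_succ_iff_lt_or_eq.mp (Nat.lt_succ_of_le hi) with hlt | heq
      · simpa [show i ≤ n by omega] using hsim i (by omega)
      · subst heq
        simpa using hq's

lemma geo_sum (B : ℕ) (hB : 1 ≤ B) : ∀ m, ∑ k ∈ Finset.range m, (B - 1) * B ^ k = B ^ m - 1 := by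
  intro m
  induction m with
  | zero => simp
  | succ m ih =>
    rw [Finset.sum_range_succ, ih]
    have h1 : 1 ≤ B ^ m := Nat.one_le_pow _ _ hB
    have h3 : (B - 1) * B ^ m = B * B ^ m - B ^ m := by rw [Nat.sub_mul, one_mul]
    have h4 : B ^ (m + 1) = B * B ^ m := by rw [pow_succ, mul_comm]
    have h5 : B ^ m ≤ B * B ^ m := Nat.le_mul_of_pos_left _ hB
    omega

lemma key [Fintype Q] (M : NA A Q) (w : ℕ → A) (π : ℕ → Q)
    (hini : π 0 ∈ M.ini) (hrun : ∀ i, (π i, w i, π (i+1)) ∈ M.trans) (n : ℕ) :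
    ∃ ρ : ℕ → Q, ρ 0 ∈ M.ini ∧
      (∀ i < n, (ρ i, w i, ρ (i+1)) ∈
        (M.prune (NA.PairRel (M.BwDiTraceIncl M) (NA.StrictRel (M.DiSim M)))).trans) ∧
      (∀ i ≤ n, π i ∈ M.acc → ρ i ∈ M.acc) := by
  classical
  set B : ℕ := Fintype.card Q + 1 with hB
  set GoodA : (ℕ → Q) → Prop := fun ρ => ρ 0 ∈ M.ini ∧
      (∀ i < n, (ρ i, w i, ρ (i+1)) ∈ M.trans) ∧
      (∀ i ≤ n, π i ∈ M.acc → ρ i ∈ M.acc) with hGoodA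
  set Nval : (ℕ → Q) → ℕ := fun ρ => ∑ k ∈ Finset.range (n+1), rk M (ρ k) * B ^ k
    with hNvalDef
  set S : Set ℕ := {m | ∃ ρ, GoodA ρ ∧ Nval ρ = m} with hSdef
  have hSne : S.Nonempty := ⟨Nval π, π, ⟨hini, fun i _ => hrun i, fun _ _ h => h⟩, rfl⟩
  have hSbdd : BddAbove S := by
    refine ⟨∑ k ∈ Finset.range (n+1), Fintype.card Q * B ^ k, ?_⟩
    rintro m ⟨ρ, _, rfl⟩
    exact Finset.sum_le_sum (fun k _ => Nat.mul_le_mul_right _ (rk_le M _))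
  obtain ⟨ρ, hρG, hρN⟩ := Nat.sSup_mem hSne hSbdd
  have hmax : ∀ ρ', GoodA ρ' → Nval ρ' ≤ Nval ρ := by
    intro ρ' hρ'
    rw [hρN]
    exact le_csSup hSbdd ⟨ρ', hρ', rfl⟩
  refine ⟨ρ, hρG.1, ?_, hρG.2.2⟩
  intro i hi
  by_contra hkept
  have htr : (ρ i, w i, ρ (i+1)) ∈ M.trans := hρG.2.1 i hi
  have hpr : ∃ t' ∈ M.trans, NA.PairRel (M.BwDiTraceIncl M) (NA.StrictRel (M.DiSim M))
      (ρ i, w i, ρ (i+1)) t' := by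
    by_contra h
    exact hkept ⟨htr, h⟩
  obtain ⟨⟨p', a', r'⟩, ht', hP⟩ := hpr
  obtain ⟨hPa, hPb, hPf⟩ := hP
  have hPa' : w i = a' := hPa
  -- replace the prefix using backward trace inclusion
  set wl : List A := List.ofFn (fun k : Fin i => w k) with hwl
  have hwlen : wl.length = i := by simp [hwl]
  have hwget : ∀ (j : ℕ) (h : j < wl.length), wl.get ⟨j, h⟩ = w j := by
    intro j h
    simp [hwl]
  have hfin : M.FinRun wl ρ := by
    intro j h
    rw [hwget j h]
    have hj : j < i := by omega
    exact hρG.2.1 j (by omega)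
  obtain ⟨σ, hσi, hσr, hσe, hσa⟩ := hPb wl ρ hρG.1 hfin (by rw [hwlen])
  rw [hwlen] at hσe hσa
  -- replace the suffix using direct simulation
  obtain ⟨τ, hτ0, hτr, hτs⟩ := sim_run M (fun k => w (i+1+k)) (n - (i+1))
      (fun k => ρ (i+1+k)) r' hPf.1 (fun k hk => hρG.2.1 (i+1+k) (by omega))
  set ρ' : ℕ → Q := fun j => if j ≤ i then σ j else τ (j - (i+1)) with hρ'def
  have hρ'le : ∀ j, j ≤ i → ρ' j = σ j := fun j hj => by simp [hρ'def, hj]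
  have hρ'gt : ∀ j, i < j → ρ' j = τ (j - (i+1)) := fun j hj => by
    simp [hρ'def, show ¬ j ≤ i by omega]
  have hσip : σ i = p' := hσe
  have hGood' : GoodA ρ' := by
    refine ⟨by rw [hρ'le 0 (by omega)]; exact hσi, ?_, ?_⟩
    · intro j hj
      rcases lt_trichotomy j i with hlt | heq | hgt
      · rw [hρ'le j (by omega), hρ'le (j+1) (by omega)]
        have := hσr j (by omega : j < wl.length)
        rwa [hwget j (by omega)] at this
      · subst heq
        rw [hρ'le j le_rfl, hρ'gt (j+1) (by omega), hσip]
        have e0 : j + 1 - (j + 1) = 0 := by omega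
        rw [e0, hτ0, hPa']
        exact ht'
      · rw [hρ'gt j (by omega), hρ'gt (j+1) (by omega)]
        have hk : j - (i+1) < n - (i+1) := by omega
        have := hτr (j - (i+1)) hk
        have e1 : i + 1 + (j - (i+1)) = j := by omega
        have e2 : j + 1 - (i+1) = j - (i+1) + 1 := by omega
        rw [e1] at this
        rw [e2]
        exact this
    · intro j hj hacc
      rcases le_or_gt j i with hle | hgt
      · rw [hρ'le j hle]
        exact hσa j hle (hρG.2.2 j (by omega) hacc)
      · rw [hρ'gt j hgt]
        have hk : j - (i+1) ≤ n - (i+1) := by omega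
        have hsim := hτs (j - (i+1)) hk
        have e1 : i + 1 + (j - (i+1)) = j := by omega
        rw [e1] at hsim
        exact diSim_acc M hsim (hρG.2.2 j hj hacc)
  -- weight increases strictly: contradiction with maximality
  have hmono' : ∀ j, i + 1 ≤ j → j ≤ n → rk M (ρ j) ≤ rk M (ρ' j) := by
    intro j h1 h2
    rw [hρ'gt j (by omega)]
    have hsim := hτs (j - (i+1)) (by omega)
    have e1 : i + 1 + (j - (i+1)) = j := by omega
    rw [e1] at hsim
    exact rk_mono M hsim
  have hstrict : rk M (ρ (i+1)) + 1 ≤ rk M (ρ' (i+1)) := by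
    have : ρ' (i+1) = r' := by
      rw [hρ'gt (i+1) (by omega)]
      simp only [Nat.sub_self]
      exact hτ0
    rw [this]
    exact rk_strict M hPf
  have hsplit : ∀ g : ℕ → ℕ, ∑ k ∈ Finset.range (n+1), g k
      = ∑ k ∈ Finset.Ico 0 (i+1), g k + ∑ k ∈ Finset.Ico (i+1) (n+1), g k := by
    intro g
    rw [Finset.range_eq_Ico,
      ← Finset.sum_Ico_consecutive g (Nat.zero_le (i+1)) (by omega : i + 1 ≤ n + 1)]
  have hBpos : 1 ≤ B := by omega
  have hpre : ∑ k ∈ Finset.Ico 0 (i+1), rk M (ρ k) * B ^ k ≤ B ^ (i+1) - 1 := by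
    rw [← geo_sum B hBpos (i+1), ← Finset.range_eq_Ico]
    refine Finset.sum_le_sum (fun k _ => Nat.mul_le_mul_right _ ?_)
    have := rk_le M (ρ k)
    omega
  have hsuf : ∑ k ∈ Finset.Ico (i+1) (n+1), rk M (ρ k) * B ^ k + B ^ (i+1)
      ≤ ∑ k ∈ Finset.Ico (i+1) (n+1), rk M (ρ' k) * B ^ k := by
    rw [Finset.sum_eq_sum_Ico_succ_bot (by omega : i+1 < n+1),
      Finset.sum_eq_sum_Ico_succ_bot (by omega : i+1 < n+1) (fun k => rk M (ρ' k) * B ^ k)]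
    have h1 : rk M (ρ (i+1)) * B ^ (i+1) + B ^ (i+1) ≤ rk M (ρ' (i+1)) * B ^ (i+1) := by
      have hmul := Nat.mul_le_mul_right (B ^ (i+1)) hstrict
      have hexp : (rk M (ρ (i+1)) + 1) * B ^ (i+1)
          = rk M (ρ (i+1)) * B ^ (i+1) + B ^ (i+1) := by ring
      omega
    have h2 : ∑ k ∈ Finset.Ico (i+1+1) (n+1), rk M (ρ k) * B ^ k
        ≤ ∑ k ∈ Finset.Ico (i+1+1) (n+1), rk M (ρ' k) * B ^ k := by
      refine Finset.sum_le_sum (fun k hk => Nat.mul_le_mul_right _ ?_)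
      rw [Finset.mem_Ico] at hk
      exact hmono' k (by omega) (by omega)
    omega
  have hcon := hmax ρ' hGood'
  rw [hNvalDef] at hcon
  simp only at hcon
  rw [hsplit (fun k => rk M (ρ k) * B ^ k), hsplit (fun k => rk M (ρ' k) * B ^ k)] at hcon
  have hBp : 1 ≤ B ^ (i+1) := Nat.one_le_pow _ _ hBpos
  omega

end NAaux

/-- `P(⊑ᵇʷ⁻ᵈⁱ, ⊏ᵈⁱ⁻ˢⁱᵐ)` (backward direct trace inclusion on
sources, strict direct forward simulation on targets) is good for pruning on
complete NBAs. -/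
theorem prune_bwDiTraceIncl_strictDiSim_gfp
    {A Q : Type*} [Fintype A] [Fintype Q] (M : NA A Q) (hM : M.Complete) :
    (M.prune (NA.PairRel (M.BwDiTraceIncl M) (NA.StrictRel (M.DiSim M)))).BuchiLang
      = M.BuchiLang := by
  classical
  apply Set.eq_of_subset_of_subset
  · rintro w ⟨π, h0, hr, hf⟩
    exact ⟨π, h0, fun i => (hr i).1, hf⟩
  · rintro w ⟨π, h0, hr, hf⟩
    have hne : Nonempty Q := ⟨π 0⟩
    set Good : ℕ → (ℕ → Q) → Prop := fun n ρ => ρ 0 ∈ M.ini ∧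
      (∀ i < n, (ρ i, w i, ρ (i+1)) ∈
        (M.prune (NA.PairRel (M.BwDiTraceIncl M) (NA.StrictRel (M.DiSim M)))).trans) ∧
      (∀ i ≤ n, π i ∈ M.acc → ρ i ∈ M.acc) with hGoodDef
    have hmono : ∀ m n ρ, m ≤ n → Good n ρ → Good m ρ := by
      rintro m n ρ hmn ⟨h1, h2, h3⟩
      exact ⟨h1, fun i hi => h2 i (by omega), fun i hi => h3 i (by omega)⟩
    have hdep : ∀ n ρ ρ', (∀ i ≤ n, ρ i = ρ' i) → Good n ρ → Good n ρ' := by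
      rintro n ρ ρ' hag ⟨h1, h2, h3⟩
      refine ⟨by rw [← hag 0 (by omega)]; exact h1, ?_, ?_⟩
      · intro i hi
        rw [← hag i (by omega), ← hag (i+1) (by omega)]
        exact h2 i hi
      · intro i hi
        rw [← hag i hi]
        exact h3 i hi
    have hex : ∀ n, ∃ ρ, Good n ρ := fun n => NAaux.key M w π h0 hr n
    obtain ⟨ρ, hρ⟩ := NAaux.koenig Good hmono hdep hex
    refine ⟨ρ, (hρ 0).1, fun i => (hρ (i+1)).2.1 i (by omega), ?_⟩
    intro n
    obtain ⟨m, hm, hacc⟩ := hf n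
    exact ⟨m, hm, (hρ m).2.2 m le_rfl hacc⟩
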